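/- For the heavy top in a Stokes flow with reduced equations Π̇ + Ω × Π = −8πμa³ Ω + mgℓ Γ × χ, T Ṡ = 8πμa³ |Ω|², and Γ̇ = −Ω × Γ (where Π = I Ω, I a symmetric positive-definite inertia matrix), the total energy e = (1/2) IΩ·Ω + mgℓ Γ·χ + U(S) is constant in time, where the internal energy U satisfies U'(S) = T(S) > 0. -/

import Mathlib

open Matrix Real

lemma hasDerivAt_dot {f g : ℝ → Fin 3 → ℝ} {f' g' : Fin 3 → ℝ} {t : ℝ}
    (hf : HasDerivAt f f' t) (hg : HasDerivAt g g' t) :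
    HasDerivAt (fun s => f s ⬝ᵥ g s) (f' ⬝ᵥ g t + f t ⬝ᵥ g') t := by
  have hfi := hasDerivAt_pi.mp hf
  have hgi := hasDerivAt_pi.mp hg
  have : HasDerivAt (fun s => ∑ i : Fin 3, f s i * g s i)
      (∑ i : Fin 3, (f' i * g t i + f t i * g' i)) t :=
    HasDerivAt.fun_sum fun i _ => (hfi i).mul (hgi i)
  simpa [dotProduct, Finset.sum_add_distrib] using this

theorem heavy_top_energy_conservation
    (I : Matrix (Fin 3) (Fin 3) ℝ) (hIsymm : Iᵀ = I) (hIpos : I.PosDef)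
    (m g l μ a : ℝ) (hm : 0 < m) (hg : 0 < g) (hl : 0 < l) (hμ : 0 < μ) (ha : 0 < a)
    (χ : Fin 3 → ℝ) (U T : ℝ → ℝ) (hU : ∀ s, HasDerivAt U (T s) s) (hT : ∀ s, 0 < T s)
    (Ω Γ : ℝ → Fin 3 → ℝ) (S : ℝ → ℝ)
    (hΩ : Differentiable ℝ Ω) (hΓ : Differentiable ℝ Γ) (hS : Differentiable ℝ S)
    (heq1 : ∀ t, deriv (fun s => I.mulVec (Ω s)) t
        + crossProduct (Ω t) (I.mulVec (Ω t))
      = -((8 * π * μ * a ^ 3) • Ω t) + (m * g * l) • crossProduct (Γ t) χ)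
    (heq2 : ∀ t, T (S t) * deriv S t = 8 * π * μ * a ^ 3 * (Ω t ⬝ᵥ Ω t))
    (heq3 : ∀ t, deriv Γ t = -crossProduct (Ω t) (Γ t)) :
    ∀ t, deriv (fun s =>
        (1 / 2) * (I.mulVec (Ω s) ⬝ᵥ Ω s) + m * g * l * (Γ s ⬝ᵥ χ) + U (S s)) t = 0 := by
  intro t
  set ω := deriv Ω t with hω
  set γ := deriv Γ t with hγ
  have hΩt : HasDerivAt Ω ω t := (hΩ t).hasDerivAt
  have hΓt : HasDerivAt Γ γ t := (hΓ t).hasDerivAt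
  have hSt : HasDerivAt S (deriv S t) t := (hS t).hasDerivAt
  -- derivative of I.mulVec ∘ Ω
  have hIΩ : HasDerivAt (fun s => I.mulVec (Ω s)) (I.mulVec ω) t := by
    refine hasDerivAt_pi.mpr fun i => ?_
    have hΩi := hasDerivAt_pi.mp hΩt
    have : HasDerivAt (fun s => ∑ j : Fin 3, I i j * Ω s j)
        (∑ j : Fin 3, I i j * ω j) t :=
      HasDerivAt.fun_sum fun j _ => (hΩi j).const_mul (I i j)
    simpa [Matrix.mulVec, dotProduct] using this
  have hIΩd : deriv (fun s => I.mulVec (Ω s)) t = I.mulVec ω := hIΩ.deriv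
  -- key equation
  have E1 : I.mulVec ω = -(crossProduct (Ω t) (I.mulVec (Ω t)))
      + (-((8 * π * μ * a ^ 3) • Ω t) + (m * g * l) • crossProduct (Γ t) χ) := by
    have := heq1 t
    rw [hIΩd] at this
    linear_combination (norm := module) this
  -- value of the derivative
  have hD : HasDerivAt (fun s =>
      (1 / 2) * (I.mulVec (Ω s) ⬝ᵥ Ω s) + m * g * l * (Γ s ⬝ᵥ χ) + U (S s))
      ((1 / 2) * (I.mulVec ω ⬝ᵥ Ω t + I.mulVec (Ω t) ⬝ᵥ ω)
        + m * g * l * (γ ⬝ᵥ χ + Γ t ⬝ᵥ 0) + T (S t) * deriv S t) t := by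
    exact (((hasDerivAt_dot hIΩ hΩt).const_mul (1/2)).add
      (((hasDerivAt_dot hΓt (hasDerivAt_const t χ))).const_mul (m*g*l))).add
      ((hU (S t)).comp t hSt)
  rw [hD.deriv]
  -- symmetry: I.mulVec (Ω t) ⬝ᵥ ω = I.mulVec ω ⬝ᵥ Ω t
  have hsym : Matrix.mulVec I (Ω t) ⬝ᵥ ω = Matrix.mulVec I ω ⬝ᵥ Ω t := by
    rw [dotProduct_comm, Matrix.dotProduct_mulVec, ← Matrix.mulVec_transpose, hIsymm,
      dotProduct_comm]
  rw [hsym, heq2 t, show γ = -(crossProduct (Ω t)) (Γ t) from hγ.trans (heq3 t), E1]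
  simp only [cross_apply, dotProduct, Fin.sum_univ_three, Matrix.cons_val_zero,
    Matrix.cons_val_one, Matrix.head_cons, Matrix.cons_val_two, Matrix.tail_cons,
    Pi.add_apply, Pi.neg_apply, Pi.smul_apply, smul_eq_mul, Pi.zero_apply]
  ring
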